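/- For integers p, q ≥ 0, let a_{p,q} be the number of partitions of Y ∪ Y′ into 2q blocks, where Y, Y′ are disjoint p-element sets with a fixed bijection y ↦ y′, such that the partition is invariant under the bijection-induced duality and no block contains both y and y′ for any y. Then a_{p,q} = 2^{p−q} · S(p,q), where S is the Stirling number of the second kind. -/

import Mathlib

open Finset

/-- Stirling numbers of the second kind. -/
def stirling : ℕ → ℕ → ℕ
  | 0, 0 => 1
  | 0, _ + 1 => 0
  | _ + 1, 0 => 0
  | n + 1, k + 1 => stirling n k + (k + 1) * stirling n (k + 1)

namespace Stmt13

abbrev El (n : ℕ) := Fin n × Bool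

variable {n p q : ℕ}

def dl {n : ℕ} (z : El n) : El n := (z.1, !z.2)

lemma dl_dl (z : El n) : dl (dl z) = z := by simp [dl]

def D {n : ℕ} (B : Finset (El n)) : Finset (El n) := B.image dl

lemma mem_D {B : Finset (El n)} {z : El n} : z ∈ D B ↔ dl z ∈ B := by
  constructor
  · intro h
    obtain ⟨w, hw, rfl⟩ := mem_image.1 h
    rwa [dl_dl]
  · intro h
    exact mem_image.2 ⟨dl z, h, dl_dl z⟩

lemma D_D (B : Finset (El n)) : D (D B) = B := by
  ext z
  simp [mem_D, dl_dl]

def Good (n q : ℕ) (P : Finset (Finset (El n))) : Prop :=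
  P.card = 2 * q ∧ (∀ B ∈ P, B.Nonempty) ∧
  (∀ A ∈ P, ∀ B ∈ P, A ≠ B → Disjoint A B) ∧
  (∀ z : El n, ∃ B ∈ P, z ∈ B) ∧
  (∀ B ∈ P, B.image (fun z => (z.1, !z.2)) ∈ P) ∧
  (∀ B ∈ P, ∀ y : Fin n, ¬((y, true) ∈ B ∧ (y, false) ∈ B))

namespace Good

variable {P : Finset (Finset (El n))}

lemma card_eq (h : Good n q P) : P.card = 2 * q := h.1
lemma nonempty (h : Good n q P) : ∀ B ∈ P, B.Nonempty := h.2.1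
lemma disj (h : Good n q P) : ∀ A ∈ P, ∀ B ∈ P, A ≠ B → Disjoint A B := h.2.2.1
lemma cover (h : Good n q P) : ∀ z : El n, ∃ B ∈ P, z ∈ B := h.2.2.2.1
lemma closed (h : Good n q P) : ∀ B ∈ P, D B ∈ P := h.2.2.2.2.1
lemma orth (h : Good n q P) : ∀ B ∈ P, ∀ y : Fin n, ¬((y, true) ∈ B ∧ (y, false) ∈ B) :=
  h.2.2.2.2.2

lemma unique (h : Good n q P) {A B : Finset (El n)} (hA : A ∈ P) (hB : B ∈ P)
    {z : El n} (hzA : z ∈ A) (hzB : z ∈ B) : A = B := by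
  by_contra hne
  exact Finset.disjoint_left.1 (h.disj A hA B hB hne) hzA hzB

lemma ne_D_self (h : Good n q P) {B : Finset (El n)} (hB : B ∈ P) : B ≠ D B := by
  intro hEq
  obtain ⟨z, hz⟩ := h.nonempty B hB
  have hdz : dl z ∈ B := mem_D.1 (hEq ▸ hz)
  rcases z with ⟨y, b⟩
  cases b
  · exact h.orth B hB y ⟨hdz, hz⟩
  · exact h.orth B hB y ⟨hz, hdz⟩

end Good

open Classical in
noncomputable def A (n q : ℕ) : Finset (Finset (Finset (El n))) :=
  Finset.univ.filter (Good n q)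

lemma mem_A {P : Finset (Finset (El n))} : P ∈ A n q ↔ Good n q P := by
  classical
  simp [A]

lemma good_zero_zero : Good 0 0 (∅ : Finset (Finset (El 0))) := by
  refine ⟨by simp, by simp, by simp, ?_, by simp, by simp⟩
  rintro ⟨y, b⟩
  exact y.elim0

lemma A_zero_zero : A 0 0 = {∅} := by
  ext P
  rw [mem_A, mem_singleton]
  constructor
  · intro h
    exact card_eq_zero.1 (by simpa using h.card_eq)
  · rintro rfl
    exact good_zero_zero

lemma card_A_zero_succ : (A 0 (q + 1)).card = 0 := by
  rw [card_eq_zero]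
  ext P
  simp only [mem_A, notMem_empty, iff_false]
  intro h
  have hpos : 0 < P.card := by rw [h.card_eq]; omega
  obtain ⟨B, hB⟩ := card_pos.1 hpos
  obtain ⟨⟨y, b⟩, _⟩ := h.nonempty B hB
  exact y.elim0

lemma card_A_succ_zero : (A (p + 1) 0).card = 0 := by
  rw [card_eq_zero]
  ext P
  simp only [mem_A, notMem_empty, iff_false]
  intro h
  have hP : P = ∅ := card_eq_zero.1 (by simpa using h.card_eq)
  obtain ⟨B, hB, _⟩ := h.cover (Fin.last p, true)
  simp [hP] at hB

/-! ### up / down -/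

def eup {p : ℕ} (z : El p) : El (p + 1) := (z.1.castSucc, z.2)

lemma eup_inj : Function.Injective (eup (p := p)) := by
  rintro ⟨y, b⟩ ⟨y', b'⟩ h
  simp only [eup, Prod.mk.injEq, Fin.castSucc_inj] at h
  simp [h.1, h.2]

lemma eup_fst_ne_last (z : El p) : (eup z).1 ≠ Fin.last p :=
  (Fin.castSucc_lt_last z.1).ne

def up {p : ℕ} (B : Finset (El p)) : Finset (El (p + 1)) := B.image eup

def down {p : ℕ} (B : Finset (El (p + 1))) : Finset (El p) :=
  Finset.univ.filter (fun z => eup z ∈ B)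

lemma mem_up {B : Finset (El p)} {w : El (p + 1)} : w ∈ up B ↔ ∃ z ∈ B, eup z = w :=
  mem_image

lemma eup_mem_up {B : Finset (El p)} {z : El p} : eup z ∈ up B ↔ z ∈ B := by
  constructor
  · intro h
    obtain ⟨z', hz', he⟩ := mem_up.1 h
    rwa [← eup_inj he]
  · intro h
    exact mem_up.2 ⟨z, h, rfl⟩

lemma mem_down {B : Finset (El (p + 1))} {z : El p} : z ∈ down B ↔ eup z ∈ B := by
  simp [down]

lemma not_last_mem_up {B : Finset (El p)} {b : Bool} : (Fin.last p, b) ∉ up B := by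
  intro h
  obtain ⟨z, _, he⟩ := mem_up.1 h
  exact eup_fst_ne_last z (by rw [he])

lemma down_up (B : Finset (El p)) : down (up B) = B := by
  ext z
  rw [mem_down, eup_mem_up]

lemma up_inj : Function.Injective (up (p := p)) := by
  intro B B' h
  rw [← down_up B, h, down_up]

lemma up_down (B : Finset (El (p + 1))) :
    up (down B) = B.filter (fun w => w.1 ≠ Fin.last p) := by
  ext w
  simp only [mem_up, mem_down, mem_filter]
  constructor
  · rintro ⟨z, hz, rfl⟩
    exact ⟨hz, eup_fst_ne_last z⟩
  · rintro ⟨hw, hne⟩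
    obtain ⟨y, hy⟩ := Fin.eq_castSucc_of_ne_last hne
    have he : eup (y, w.2) = w := by
      simp only [eup, hy]
    exact ⟨(y, w.2), by rwa [he], he⟩

lemma dl_eup (z : El p) : dl (eup z) = eup (dl z) := rfl

lemma D_up (B : Finset (El p)) : D (up B) = up (D B) := by
  unfold D up
  rw [Finset.image_image, Finset.image_image]
  rfl

lemma D_down (B : Finset (El (p + 1))) : D (down B) = down (D B) := by
  ext z
  rw [mem_D, mem_down, mem_down, mem_D, dl_eup]

lemma down_insert_last {B : Finset (El (p + 1))} {b : Bool} :
    down (insert (Fin.last p, b) B) = down B := by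
  ext z
  rw [mem_down, mem_down, mem_insert]
  have : eup z ≠ (Fin.last p, b) := by
    intro h
    exact eup_fst_ne_last z (by rw [h])
  simp [this]

lemma up_down_eq_self {B : Finset (El (p + 1))} (h : ∀ w ∈ B, w.1 ≠ Fin.last p) :
    up (down B) = B := by
  rw [up_down]
  exact filter_eq_self.2 h

lemma down_nonempty_of_no_last {B : Finset (El (p + 1))} (hne : B.Nonempty)
    (h : ∀ w ∈ B, w.1 ≠ Fin.last p) : (down B).Nonempty := by
  obtain ⟨w, hw⟩ := hne
  obtain ⟨y, hy⟩ := Fin.eq_castSucc_of_ne_last (h w hw)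
  refine ⟨(y, w.2), mem_down.2 ?_⟩
  have he : eup (y, w.2) = w := by simp only [eup, hy]
  rwa [he]

lemma last_cases {w : El (p + 1)} (h : w.1 = Fin.last p) :
    w = (Fin.last p, true) ∨ w = (Fin.last p, false) := by
  rcases w with ⟨y, b⟩
  cases b
  · right; simp_all
  · left; simp_all

lemma insert_up_down {B : Finset (El (p + 1))} {b : Bool}
    (hb : (Fin.last p, b) ∈ B) (hnb : ((Fin.last p, !b)) ∉ B) :
    insert (Fin.last p, b) (up (down B)) = B := by
  rw [up_down]
  ext w
  simp only [mem_insert, mem_filter]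
  constructor
  · rintro (rfl | ⟨hw, _⟩) <;> assumption
  · intro hw
    by_cases hl : w.1 = Fin.last p
    · rcases last_cases hl with rfl | rfl
      · cases b
        · exact absurd hw (by simpa using hnb)
        · exact Or.inl rfl
      · cases b
        · exact Or.inl rfl
        · exact absurd hw (by simpa using hnb)
    · exact Or.inr ⟨hw, hl⟩

lemma up_disjoint {B B' : Finset (El p)} (h : Disjoint B B') : Disjoint (up B) (up B') := by
  rw [Finset.disjoint_left] at h ⊢
  intro w hw hw'
  obtain ⟨z, hz, rfl⟩ := mem_up.1 hw
  exact h hz (eup_mem_up.1 hw')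

lemma mem_up_pair {B : Finset (El p)} {y : Fin (p + 1)} {b : Bool} (h : (y, b) ∈ up B) :
    ∃ y0 : Fin p, y0.castSucc = y ∧ (y0, b) ∈ B := by
  obtain ⟨⟨y0, b0⟩, hz, he⟩ := mem_up.1 h
  simp only [eup, Prod.mk.injEq] at he
  exact ⟨y0, he.1, by rwa [he.2] at hz⟩

/-- The key restriction lemma. -/
lemma good_down {P : Finset (Finset (El (p + 1)))} {q' q'' : ℕ} (hP : Good (p + 1) q' P)
    (R : Finset (Finset (El (p + 1)))) (hR : R ⊆ P)
    (hne : ∀ B ∈ R, (down B).Nonempty)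
    (hcov : ∀ z : El p, ∃ B ∈ R, eup z ∈ B)
    (hcl : ∀ B ∈ R, D B ∈ R)
    (hcard : R.card = 2 * q'') :
    Good p q'' (R.image down) := by
  have hinj : ∀ B ∈ R, ∀ B' ∈ R, down B = down B' → B = B' := by
    intro B hB B' hB' h
    by_contra hne'
    obtain ⟨z, hz⟩ := hne B hB
    exact Finset.disjoint_left.1 (hP.disj B (hR hB) B' (hR hB') hne')
      (mem_down.1 hz) (mem_down.1 (h ▸ hz))
  refine ⟨?_, ?_, ?_, ?_, ?_, ?_⟩
  · rw [Finset.card_image_of_injOn (fun B hB B' hB' => hinj B hB B' hB'), hcard]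
  · intro B hB
    obtain ⟨B', hB', rfl⟩ := mem_image.1 hB
    exact hne B' hB'
  · intro X hX Y hY hXY
    obtain ⟨B, hB, rfl⟩ := mem_image.1 hX
    obtain ⟨B', hB', rfl⟩ := mem_image.1 hY
    have hBB' : B ≠ B' := fun h => hXY (by rw [h])
    rw [Finset.disjoint_left]
    intro z hz hz'
    exact Finset.disjoint_left.1 (hP.disj B (hR hB) B' (hR hB') hBB')
      (mem_down.1 hz) (mem_down.1 hz')
  · intro z
    obtain ⟨B, hB, hz⟩ := hcov z
    exact ⟨down B, mem_image_of_mem _ hB, mem_down.2 hz⟩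
  · intro X hX
    obtain ⟨B, hB, rfl⟩ := mem_image.1 hX
    have : (down B).image (fun z => (z.1, !z.2)) = down (D B) := by
      rw [← D_down]; rfl
    rw [this]
    exact mem_image_of_mem _ (hcl B hB)
  · intro X hX y hy
    obtain ⟨B, hB, rfl⟩ := mem_image.1 hX
    exact hP.orth B (hR hB) y.castSucc ⟨mem_down.1 hy.1, mem_down.1 hy.2⟩

section Step

variable {p q : ℕ}

/-- abbreviations for the two distinguished points -/
local notation "zt" => ((Fin.last p, true) : El (p + 1))
local notation "zf" => ((Fin.last p, false) : El (p + 1))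

lemma D_singleton_t : D ({zt} : Finset (El (p + 1))) = {zf} := by
  simp [D, dl]

lemma D_singleton_f : D ({zf} : Finset (El (p + 1))) = {zt} := by
  simp [D, dl]

lemma singleton_t_ne_f : ({zt} : Finset (El (p + 1))) ≠ {zf} := by
  simp

lemma up_good {Q : Finset (Finset (El p))} (hQ : Good p q Q) :
    Good (p + 1) (q + 1) (insert {zt} (insert {zf} (Q.image up))) := by
  have htX : ({zt} : Finset (El (p + 1))) ∉ Q.image up := by
    intro h
    obtain ⟨B, _, hB⟩ := mem_image.1 h
    have : zt ∈ up B := by rw [hB]; exact mem_singleton_self _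
    exact not_last_mem_up this
  have hfX : ({zf} : Finset (El (p + 1))) ∉ Q.image up := by
    intro h
    obtain ⟨B, _, hB⟩ := mem_image.1 h
    have : zf ∈ up B := by rw [hB]; exact mem_singleton_self _
    exact not_last_mem_up this
  have htY : ({zt} : Finset (El (p + 1))) ∉ insert {zf} (Q.image up) := by
    simp only [mem_insert]
    push_neg
    exact ⟨singleton_t_ne_f, htX⟩
  refine ⟨?_, ?_, ?_, ?_, ?_, ?_⟩
  · rw [card_insert_of_notMem htY, card_insert_of_notMem hfX,
      Finset.card_image_of_injective Q up_inj, hQ.card_eq]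
    ring
  · intro B hB
    rcases mem_insert.1 hB with rfl | hB
    · exact singleton_nonempty _
    rcases mem_insert.1 hB with rfl | hB
    · exact singleton_nonempty _
    obtain ⟨B0, hB0, rfl⟩ := mem_image.1 hB
    exact (hQ.nonempty B0 hB0).image _
  · intro X hX Y hY hXY
    have keyt : ∀ Z ∈ insert ({zf} : Finset (El (p+1))) (Q.image up), Disjoint {zt} Z := by
      intro Z hZ
      rcases mem_insert.1 hZ with rfl | hZ
      · simp
      obtain ⟨B0, _, rfl⟩ := mem_image.1 hZ
      simpa using not_last_mem_up (B := B0) (b := true)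
    have keyf : ∀ Z ∈ Q.image up, Disjoint {zf} Z := by
      intro Z hZ
      obtain ⟨B0, _, rfl⟩ := mem_image.1 hZ
      simpa using not_last_mem_up (B := B0) (b := false)
    rcases mem_insert.1 hX with rfl | hX
    · exact keyt Y (by simpa [hXY.symm] using hY)
    rcases mem_insert.1 hY with rfl | hY
    · exact (keyt X hX).symm
    rcases mem_insert.1 hX with rfl | hX
    · exact keyf Y (by simpa [hXY.symm] using hY)
    rcases mem_insert.1 hY with rfl | hY
    · exact (keyf X hX).symm
    obtain ⟨B0, hB0, rfl⟩ := mem_image.1 hX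
    obtain ⟨B1, hB1, rfl⟩ := mem_image.1 hY
    have : B0 ≠ B1 := fun h => hXY (by rw [h])
    exact up_disjoint (hQ.disj B0 hB0 B1 hB1 this)
  · intro z
    by_cases hl : z.1 = Fin.last p
    · rcases last_cases hl with rfl | rfl
      · exact ⟨{zt}, mem_insert_self _ _, mem_singleton_self _⟩
      · exact ⟨{zf}, mem_insert.2 (Or.inr (mem_insert_self _ _)), mem_singleton_self _⟩
    · obtain ⟨y, hy⟩ := Fin.eq_castSucc_of_ne_last hl
      obtain ⟨B, hB, hz⟩ := hQ.cover (y, z.2)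
      refine ⟨up B, mem_insert.2 (Or.inr (mem_insert.2 (Or.inr (mem_image_of_mem _ hB)))), ?_⟩
      have : eup (y, z.2) = z := by simp only [eup, hy]
      rw [← this]
      exact eup_mem_up.2 hz
  · intro B hB
    show D B ∈ _
    rcases mem_insert.1 hB with rfl | hB
    · rw [D_singleton_t]
      exact mem_insert.2 (Or.inr (mem_insert_self _ _))
    rcases mem_insert.1 hB with rfl | hB
    · rw [D_singleton_f]
      exact mem_insert_self _ _
    obtain ⟨B0, hB0, rfl⟩ := mem_image.1 hB
    rw [D_up]
    exact mem_insert.2 (Or.inr (mem_insert.2 (Or.inr (mem_image_of_mem _ (hQ.closed B0 hB0)))))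
  · intro B hB y
    rintro ⟨h1, h2⟩
    rcases mem_insert.1 hB with rfl | hB
    · rw [mem_singleton] at h1 h2
      have := h2 ▸ rfl (a := (y, false)).symm
      simp at h2
    rcases mem_insert.1 hB with rfl | hB
    · simp at h1
    obtain ⟨B0, hB0, rfl⟩ := mem_image.1 hB
    obtain ⟨y0, hy0, hm0⟩ := mem_up_pair h1
    obtain ⟨y1, hy1, hm1⟩ := mem_up_pair h2
    have : y0 = y1 := Fin.castSucc_injective _ (by rw [hy0, hy1])
    exact hQ.orth B0 hB0 y0 ⟨hm0, this ▸ hm1⟩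

lemma no_last_of_mem_erase2 {P : Finset (Finset (El (p + 1)))} (hP : Good (p + 1) (q + 1) P)
    (ht : ({zt} : Finset (El (p + 1))) ∈ P) {B : Finset (El (p + 1))}
    (hB : B ∈ (P.erase {zt}).erase {zf}) : ∀ w ∈ B, w.1 ≠ Fin.last p := by
  have hf : ({zf} : Finset (El (p + 1))) ∈ P := by
    have := hP.closed _ ht
    rwa [D_singleton_t] at this
  rw [mem_erase, mem_erase] at hB
  obtain ⟨hBf, hBt, hBP⟩ := hB
  intro w hw hl
  rcases last_cases hl with rfl | rfl
  · exact hBt (hP.unique hBP ht hw (mem_singleton_self _))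
  · exact hBf (hP.unique hBP hf hw (mem_singleton_self _))

lemma card_S1 :
    ((A (p + 1) (q + 1)).filter
      (fun P => ({zt} : Finset (El (p + 1))) ∈ P)).card = (A p q).card := by
  refine card_bij' (fun P _ => ((P.erase {zt}).erase {zf}).image down)
    (fun Q _ => insert {zt} (insert {zf} (Q.image up))) ?hi ?hj ?left ?right
  case hi =>
    intro P hPm
    rw [mem_filter, mem_A] at hPm
    obtain ⟨hP, ht⟩ := hPm
    have hf : ({zf} : Finset (El (p + 1))) ∈ P := by
      have := hP.closed _ ht
      rwa [D_singleton_t] at this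
    rw [mem_A]
    apply good_down hP
    · exact (erase_subset _ _).trans (erase_subset _ _)
    · intro B hB
      exact down_nonempty_of_no_last
        (hP.nonempty B ((erase_subset _ _).trans (erase_subset _ _) hB))
        (no_last_of_mem_erase2 hP ht hB)
    · intro z
      obtain ⟨B, hB, hz⟩ := hP.cover (eup z)
      refine ⟨B, ?_, hz⟩
      rw [mem_erase, mem_erase]
      refine ⟨?_, ?_, hB⟩
      · rintro rfl
        exact eup_fst_ne_last z (by rw [mem_singleton.1 hz])
      · rintro rfl
        exact eup_fst_ne_last z (by rw [mem_singleton.1 hz])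
    · intro B hB
      rw [mem_erase, mem_erase] at hB ⊢
      obtain ⟨hBf, hBt, hBP⟩ := hB
      refine ⟨?_, ?_, hP.closed B hBP⟩
      · intro h
        apply hBt
        rw [← D_D B, h, D_singleton_f]
      · intro h
        apply hBf
        rw [← D_D B, h, D_singleton_t]
    · have h1 : ({zf} : Finset (El (p+1))) ∈ P.erase {zt} :=
        mem_erase.2 ⟨singleton_t_ne_f.symm, hf⟩
      rw [card_erase_of_mem h1, card_erase_of_mem ht, hP.card_eq]
      omega
  case hj =>
    intro Q hQm
    rw [mem_A] at hQm
    rw [mem_filter, mem_A]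
    exact ⟨up_good hQm, mem_insert_self _ _⟩
  case left =>
    intro P hPm
    rw [mem_filter, mem_A] at hPm
    obtain ⟨hP, ht⟩ := hPm
    have hf : ({zf} : Finset (El (p + 1))) ∈ P := by
      have := hP.closed _ ht
      rwa [D_singleton_t] at this
    have key : (((P.erase {zt}).erase {zf}).image down).image up
        = (P.erase {zt}).erase {zf} := by
      rw [Finset.image_image]
      rw [show ((P.erase {zt}).erase {zf}).image (up ∘ down)
          = ((P.erase {zt}).erase {zf}).image id from
        Finset.image_congr (fun B hB => up_down_eq_self (no_last_of_mem_erase2 hP ht hB))]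
      exact Finset.image_id
    rw [key, insert_erase (mem_erase.2 ⟨singleton_t_ne_f.symm, hf⟩), insert_erase ht]
  case right =>
    intro Q _
    have htX : ({zt} : Finset (El (p + 1))) ∉ Q.image up := by
      intro h
      obtain ⟨B, _, hB⟩ := mem_image.1 h
      have : zt ∈ up B := by rw [hB]; exact mem_singleton_self _
      exact not_last_mem_up this
    have hfX : ({zf} : Finset (El (p + 1))) ∉ Q.image up := by
      intro h
      obtain ⟨B, _, hB⟩ := mem_image.1 h
      have : zf ∈ up B := by rw [hB]; exact mem_singleton_self _
      exact not_last_mem_up this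
    have htY : ({zt} : Finset (El (p + 1))) ∉ insert {zf} (Q.image up) := by
      simp only [mem_insert]
      push_neg
      exact ⟨singleton_t_ne_f, htX⟩
    rw [erase_insert htY, erase_insert hfX, Finset.image_image]
    rw [show Q.image (down ∘ up) = Q.image id from
      Finset.image_congr (fun B _ => down_up B)]
    exact Finset.image_id


/-! ### Case 2: `{t}` is not a block -/

def gC (C B : Finset (El p)) : Finset (El (p + 1)) :=
  if B = C then insert zt (up C) else if B = D C then insert zf (up B) else up B

lemma down_gC (C B : Finset (El p)) : down (gC C B) = B := by
  unfold gC
  split_ifs with h1 h2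
  · subst h1; rw [down_insert_last, down_up]
  · rw [down_insert_last, down_up]
  · exact down_up B

lemma gC_inj (C : Finset (El p)) : Function.Injective (gC C) := fun B B' h => by
  rw [← down_gC C B, h, down_gC]

lemma D_insert (a : El n) (s : Finset (El n)) : D (insert a s) = insert (dl a) (D s) :=
  Finset.image_insert _ _ _

lemma zt_mem_gC_iff {C : Finset (El p)} (hCD : C ≠ D C) (B : Finset (El p)) :
    zt ∈ gC C B ↔ B = C := by
  unfold gC
  split_ifs with h1 h2
  · simp [h1]
  · simp only [mem_insert]
    simp only [h2] at h1 ⊢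
    simp [not_last_mem_up]
    exact fun h => h1 h
  · simp [h1, not_last_mem_up]

lemma zf_mem_gC_iff {C : Finset (El p)} (hCD : C ≠ D C) (B : Finset (El p)) :
    zf ∈ gC C B ↔ B = D C := by
  unfold gC
  split_ifs with h1 h2
  · subst h1
    simp only [mem_insert]
    simp [hCD, not_last_mem_up]
  · simp [h2]
  · simp [h2, not_last_mem_up]

lemma mem_gC_up {C B : Finset (El p)} {w : El (p + 1)} (hne_t : w ≠ zt) (hne_f : w ≠ zf)
    (h : w ∈ gC C B) : w ∈ up B := by
  unfold gC at h
  split_ifs at h with h1 h2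
  · subst h1
    exact (mem_insert.1 h).resolve_left hne_t
  · exact (mem_insert.1 h).resolve_left hne_f
  · exact h

lemma up_subset_gC (C B : Finset (El p)) : up B ⊆ gC C B := by
  unfold gC
  split_ifs with h1 h2
  · subst h1; exact subset_insert _ _
  · exact subset_insert _ _
  · exact Subset.rfl

lemma D_gC {C : Finset (El p)} (hCD : C ≠ D C) (B : Finset (El p)) :
    D (gC C B) = gC C (D B) := by
  by_cases h1 : B = C
  · subst h1
    rw [show gC B B = insert zt (up B) from if_pos rfl, D_insert, D_up]
    rw [show gC B (D B) = insert zf (up (D B)) from by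
      rw [gC, if_neg (fun h => hCD h.symm), if_pos rfl]]
    rfl
  · by_cases h2 : B = D C
    · subst h2
      rw [show gC C (D C) = insert zf (up (D C)) from by
        rw [gC, if_neg (fun h => hCD h.symm), if_pos rfl]]
      rw [D_insert, D_up, D_D]
      rw [show gC C C = insert zt (up C) from if_pos rfl]
      rfl
    · have hd1 : D B ≠ C := by
        intro h
        exact h2 (by rw [← D_D B, h])
      have hd2 : D B ≠ D C := by
        intro h
        exact h1 (by rw [← D_D B, h, D_D])
      rw [show gC C B = up B from by rw [gC, if_neg h1, if_neg h2], D_up]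
      rw [show gC C (D B) = up (D B) from by rw [gC, if_neg hd1, if_neg hd2]]

lemma image_down_ins (C : Finset (El p)) (Q : Finset (Finset (El p))) :
    (Q.image (gC C)).image down = Q := by
  rw [Finset.image_image,
    show Q.image (down ∘ gC C) = Q.image id from
      Finset.image_congr (fun B _ => down_gC C B), Finset.image_id]

lemma singleton_t_not_mem_ins {Q : Finset (Finset (El p))} {C : Finset (El p)}
    (hQ : Good p (q + 1) Q) (hC : C ∈ Q) : ({zt} : Finset (El (p + 1))) ∉ Q.image (gC C) := by
  have hCD : C ≠ D C := hQ.ne_D_self hC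
  intro h
  obtain ⟨B, hB, hgB⟩ := mem_image.1 h
  have hzt : zt ∈ gC C B := by rw [hgB]; exact mem_singleton_self _
  have hBC : B = C := (zt_mem_gC_iff hCD B).1 hzt
  subst hBC
  rw [show gC B B = insert zt (up B) from if_pos rfl] at hgB
  obtain ⟨z, hz⟩ := hQ.nonempty B hB
  have : eup z ∈ ({zt} : Finset (El (p + 1))) := by
    rw [← hgB]
    exact mem_insert.2 (Or.inr (eup_mem_up.2 hz))
  exact eup_fst_ne_last z (by rw [mem_singleton.1 this])

lemma ins_good {Q : Finset (Finset (El p))} {C : Finset (El p)}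
    (hQ : Good p (q + 1) Q) (hC : C ∈ Q) : Good (p + 1) (q + 1) (Q.image (gC C)) := by
  have hCD : C ≠ D C := hQ.ne_D_self hC
  have hDC : D C ∈ Q := hQ.closed C hC
  refine ⟨?_, ?_, ?_, ?_, ?_, ?_⟩
  · rw [Finset.card_image_of_injective Q (gC_inj C), hQ.card_eq]
  · intro B hB
    obtain ⟨B0, hB0, rfl⟩ := mem_image.1 hB
    unfold gC
    split_ifs with h1 h2
    · exact insert_nonempty _ _
    · exact insert_nonempty _ _
    · exact (hQ.nonempty B0 hB0).image _
  · intro X hX Y hY hXY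
    obtain ⟨B1, hB1, rfl⟩ := mem_image.1 hX
    obtain ⟨B2, hB2, rfl⟩ := mem_image.1 hY
    have hB12 : B1 ≠ B2 := fun h => hXY (by rw [h])
    rw [Finset.disjoint_left]
    intro w hw1 hw2
    by_cases hwt : w = zt
    · subst hwt
      exact hB12 (((zt_mem_gC_iff hCD B1).1 hw1).trans ((zt_mem_gC_iff hCD B2).1 hw2).symm)
    by_cases hwf : w = zf
    · subst hwf
      exact hB12 (((zf_mem_gC_iff hCD B1).1 hw1).trans ((zf_mem_gC_iff hCD B2).1 hw2).symm)
    obtain ⟨z, hz, rfl⟩ := mem_up.1 (mem_gC_up hwt hwf hw1)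
    exact Finset.disjoint_left.1 (hQ.disj B1 hB1 B2 hB2 hB12) hz
      (eup_mem_up.1 (mem_gC_up hwt hwf hw2))
  · intro z
    by_cases hl : z.1 = Fin.last p
    · rcases last_cases hl with rfl | rfl
      · exact ⟨gC C C, mem_image_of_mem _ hC, (zt_mem_gC_iff hCD C).2 rfl⟩
      · exact ⟨gC C (D C), mem_image_of_mem _ hDC, (zf_mem_gC_iff hCD (D C)).2 rfl⟩
    · obtain ⟨y, hy⟩ := Fin.eq_castSucc_of_ne_last hl
      obtain ⟨B, hB, hz⟩ := hQ.cover (y, z.2)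
      refine ⟨gC C B, mem_image_of_mem _ hB, up_subset_gC C B ?_⟩
      have : eup (y, z.2) = z := by simp only [eup, hy]
      rw [← this]
      exact eup_mem_up.2 hz
  · intro X hX
    show D X ∈ _
    obtain ⟨B, hB, rfl⟩ := mem_image.1 hX
    rw [D_gC hCD]
    exact mem_image_of_mem _ (hQ.closed B hB)
  · intro X hX y
    rintro ⟨h1, h2⟩
    obtain ⟨B, hB, rfl⟩ := mem_image.1 hX
    by_cases hl : y = Fin.last p
    · subst hl
      have hB1 : B = C := (zt_mem_gC_iff hCD B).1 h1
      have hB2 : B = D C := (zf_mem_gC_iff hCD B).1 h2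
      exact hCD (hB1 ▸ hB2)
    · have hne_t : ((y, true) : El (p + 1)) ≠ zt := by simp [hl]
      have hne_t' : ((y, false) : El (p + 1)) ≠ zt := by simp
      have hne_f : ((y, true) : El (p + 1)) ≠ zf := by simp
      have hne_f' : ((y, false) : El (p + 1)) ≠ zf := by simp [hl]
      obtain ⟨y0, hy0, hm0⟩ := mem_up_pair (mem_gC_up hne_t hne_f h1)
      obtain ⟨y1, hy1, hm1⟩ := mem_up_pair (mem_gC_up hne_t' hne_f' h2)
      have : y0 = y1 := Fin.castSucc_injective _ (by rw [hy0, hy1])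
      exact hQ.orth B hB y0 ⟨hm0, this ▸ hm1⟩

lemma down_nonempty_of_mem {B : Finset (El (p + 1))} {w : El (p + 1)} (hw : w ∈ B)
    (h : w.1 ≠ Fin.last p) : (down B).Nonempty := by
  obtain ⟨y, hy⟩ := Fin.eq_castSucc_of_ne_last h
  refine ⟨(y, w.2), mem_down.2 ?_⟩
  have he : eup (y, w.2) = w := by simp only [eup, hy]
  rwa [he]

lemma down_block_nonempty {P : Finset (Finset (El (p + 1)))} {B : Finset (El (p + 1))}
    (hP : Good (p + 1) (q + 1) P) (hnt : ({zt} : Finset (El (p + 1))) ∉ P) (hB : B ∈ P) :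
    (down B).Nonempty := by
  have key : ∀ b : Bool, (Fin.last p, b) ∈ B → (Fin.last p, !b) ∉ B →
      ({(Fin.last p, b)} : Finset (El (p + 1))) ∉ P → (down B).Nonempty := by
    intro b hb hnb hsing
    have hBne : B ≠ {(Fin.last p, b)} := fun h => hsing (h ▸ hB)
    have : ∃ w ∈ B, w ≠ (Fin.last p, b) := by
      by_contra hcon
      push_neg at hcon
      exact hBne (eq_singleton_iff_unique_mem.2 ⟨hb, hcon⟩)
    obtain ⟨w, hw, hwne⟩ := this
    refine down_nonempty_of_mem hw ?_
    intro hl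
    rcases last_cases hl with rfl | rfl
    · cases b
      · exact hnb (by simpa using hw)
      · exact hwne rfl
    · cases b
      · exact hwne rfl
      · exact hnb (by simpa using hw)
  obtain ⟨w, hw⟩ := hP.nonempty B hB
  by_cases hl : w.1 = Fin.last p
  · have hnf : ({zf} : Finset (El (p + 1))) ∉ P := by
      intro h
      have := hP.closed _ h
      rw [D_singleton_f] at this
      exact hnt this
    rcases last_cases hl with rfl | rfl
    · refine key true hw ?_ hnt
      intro h
      exact hP.orth B hB (Fin.last p) ⟨hw, by simpa using h⟩
    · refine key false hw ?_ hnf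
      intro h
      exact hP.orth B hB (Fin.last p) ⟨by simpa using h, hw⟩
  · exact down_nonempty_of_mem hw hl

lemma fiber_card {Q : Finset (Finset (El p))} (hQm : Q ∈ A p (q + 1)) :
    (((A (p + 1) (q + 1)).filter (fun P => ({zt} : Finset (El (p + 1))) ∉ P)).filter
      (fun P => P.image down = Q)).card = 2 * (q + 1) := by
  rw [mem_A] at hQm
  rw [← hQm.card_eq]
  refine (card_bij (fun C _ => Q.image (gC C)) ?hi ?inj ?surj).symm
  case hi =>
    intro C hC
    rw [mem_filter, mem_filter, mem_A]
    exact ⟨⟨ins_good hQm hC, singleton_t_not_mem_ins hQm hC⟩, image_down_ins C Q⟩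
  case inj =>
    intro C1 h1 C2 h2 heq
    have hCD : C1 ≠ D C1 := hQm.ne_D_self h1
    have hmem : gC C1 C1 ∈ Q.image (gC C2) := by
      rw [← heq]
      exact mem_image_of_mem _ h1
    obtain ⟨B, hB, hgB⟩ := mem_image.1 hmem
    have hzt : zt ∈ gC C2 B := by
      rw [hgB]
      exact (zt_mem_gC_iff hCD C1).2 rfl
    have hB2 : B = C2 := (zt_mem_gC_iff (hQm.ne_D_self h2) B).1 hzt
    subst hB2
    have := congrArg down hgB
    rw [down_gC, down_gC] at this
    exact this.symm
  case surj =>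
    intro P hPm
    rw [mem_filter, mem_filter, mem_A] at hPm
    obtain ⟨⟨hP, hnt⟩, hPd⟩ := hPm
    obtain ⟨Bt, hBt, hzt⟩ := hP.cover zt
    have hCQ : down Bt ∈ Q := hPd ▸ mem_image_of_mem down hBt
    set C := down Bt with hCdef
    have hCD : C ≠ D C := hQm.ne_D_self hCQ
    have hft : zf ∉ Bt := fun h => hP.orth Bt hBt (Fin.last p) ⟨hzt, h⟩
    have hDBt : D Bt ∈ P := hP.closed _ hBt
    have hfD : zf ∈ D Bt := mem_D.2 hzt
    have htD : zt ∉ D Bt := fun h => hft (mem_D.1 h)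
    have hBtD : Bt ≠ D Bt := fun h => htD (h ▸ hzt)
    have key1 : gC C C = Bt := by
      rw [show gC C C = insert zt (up C) from if_pos rfl, hCdef]
      exact insert_up_down (b := true) hzt hft
    have key2 : gC C (D C) = D Bt := by
      rw [show gC C (D C) = insert zf (up (D C)) from by
        rw [gC, if_neg (fun h => hCD h.symm), if_pos rfl], hCdef, D_down]
      exact insert_up_down (b := false) hfD htD
    refine ⟨C, hCQ, ?_⟩
    refine (eq_of_subset_of_card_le ?hsub ?hle).symm
    case hle =>
      calc (Q.image (gC C)).card ≤ Q.card := card_image_le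
        _ = 2 * (q + 1) := hQm.card_eq
        _ = P.card := hP.card_eq.symm
    case hsub =>
      intro B hB
      by_cases h1 : zt ∈ B
      · have hBBt : B = Bt := hP.unique hB hBt h1 hzt
        exact mem_image.2 ⟨C, hCQ, key1.trans hBBt.symm⟩
      by_cases h2 : zf ∈ B
      · have hBDt : B = D Bt := hP.unique hB hDBt h2 hfD
        exact mem_image.2 ⟨D C, hQm.closed C hCQ, key2.trans hBDt.symm⟩
      have hnl : ∀ w ∈ B, w.1 ≠ Fin.last p := by
        intro w hw hl
        rcases last_cases hl with rfl | rfl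
        · exact h1 hw
        · exact h2 hw
      have hdne : (down B).Nonempty := down_nonempty_of_no_last (hP.nonempty B hB) hnl
      have hBne_t : B ≠ Bt := fun h => h1 (h ▸ hzt)
      have hBne_f : B ≠ D Bt := fun h => h2 (h ▸ hfD)
      have hdC : down B ≠ C := by
        intro h
        obtain ⟨z, hz⟩ := hdne
        exact Finset.disjoint_left.1 (hP.disj B hB Bt hBt hBne_t) (mem_down.1 hz)
          (mem_down.1 (by rw [h] at hz; exact hz))
      have hdDC : down B ≠ D C := by
        intro h
        obtain ⟨z, hz⟩ := hdne
        rw [hCdef, D_down] at h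
        exact Finset.disjoint_left.1 (hP.disj B hB (D Bt) hDBt hBne_f) (mem_down.1 hz)
          (mem_down.1 (by rw [h] at hz; exact hz))
      have : gC C (down B) = B := by
        rw [gC, if_neg hdC, if_neg hdDC]
        exact up_down_eq_self hnl
      exact mem_image.2 ⟨down B, hPd ▸ mem_image_of_mem down hB, this⟩

lemma card_S2 :
    ((A (p + 1) (q + 1)).filter (fun P => ({zt} : Finset (El (p + 1))) ∉ P)).card
      = (A p (q + 1)).card * (2 * (q + 1)) := by
  rw [card_eq_sum_card_fiberwise (f := fun P => P.image down) (t := A p (q + 1)) ?hf]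
  case hf =>
    intro P hPm
    rw [mem_coe, mem_filter, mem_A] at hPm
    obtain ⟨hP, hnt⟩ := hPm
    rw [mem_coe, mem_A]
    refine good_down hP P Subset.rfl ?_ ?_ hP.closed hP.card_eq
    · intro B hB
      exact down_block_nonempty hP hnt hB
    · intro z
      exact hP.cover (eup z)
  rw [Finset.sum_congr rfl (fun Q hQ => fiber_card hQ), sum_const, smul_eq_mul]

lemma card_A_step : (A (p + 1) (q + 1)).card
    = (A p q).card + (A p (q + 1)).card * (2 * (q + 1)) := by
  rw [← card_filter_add_card_filter_not
    (p := fun P => ({zt} : Finset (El (p + 1))) ∈ P) (s := A (p + 1) (q + 1)),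
    card_S1, card_S2]

end Step

lemma stirling_eq_zero_of_lt : ∀ {n k : ℕ}, n < k → stirling n k = 0 := by
  intro n
  induction n with
  | zero =>
    intro k hk
    obtain ⟨m, rfl⟩ : ∃ m, k = m + 1 := ⟨k - 1, by omega⟩
    rfl
  | succ n ih =>
    intro k hk
    obtain ⟨m, rfl⟩ : ∃ m, k = m + 1 := ⟨k - 1, by omega⟩
    show stirling n m + (m + 1) * stirling n (m + 1) = 0
    rw [ih (by omega), ih (by omega)]
    ring

lemma card_A_eq : ∀ p q : ℕ, (A p q).card = 2 ^ (p - q) * stirling p q := by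
  intro p
  induction p with
  | zero =>
    intro q
    cases q with
    | zero => rw [A_zero_zero]; rfl
    | succ q => rw [card_A_zero_succ]; rfl
  | succ p ih =>
    intro q
    cases q with
    | zero =>
      rw [card_A_succ_zero]
      show 0 = 2 ^ (p + 1 - 0) * 0
      ring
    | succ q =>
      rw [card_A_step, ih q, ih (q + 1),
        show stirling (p + 1) (q + 1) = stirling p q + (q + 1) * stirling p (q + 1) from rfl,
        show p + 1 - (q + 1) = p - q from by omega]
      by_cases h : q + 1 ≤ p
      · rw [show p - q = (p - (q + 1)) + 1 from by omega, pow_succ]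
        ring
      · rw [stirling_eq_zero_of_lt (show p < q + 1 from by omega)]
        ring

end Stmt13

/-- `a_{p,q}`, the number of self-dual partitions of `Y ∪ Y'` (modelled as
`Fin p × Bool`, with duality `(y, b) ↦ (y, ¬b)`) into `2q` blocks which are
orthogonal to the matching `{y, y'}`, equals `2^{p-q}·S(p,q)`. -/
theorem stmt13 (p q : ℕ) :
    Nat.card {P : Finset (Finset (Fin p × Bool)) //
      P.card = 2 * q ∧ (∀ B ∈ P, B.Nonempty) ∧
      (∀ A ∈ P, ∀ B ∈ P, A ≠ B → Disjoint A B) ∧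
      (∀ z : Fin p × Bool, ∃ B ∈ P, z ∈ B) ∧
      (∀ B ∈ P, B.image (fun z => (z.1, !z.2)) ∈ P) ∧
      (∀ B ∈ P, ∀ y : Fin p, ¬((y, true) ∈ B ∧ (y, false) ∈ B))} =
    2 ^ (p - q) * stirling p q := by
  classical
  rw [← Stmt13.card_A_eq p q]
  rw [Nat.card_eq_fintype_card]
  rw [Fintype.card_subtype]
  congr 1
  ext P
  rw [Finset.mem_filter, Stmt13.mem_A]
  simp [Stmt13.Good]
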